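/- Completeness of concatenation enumeration: every nonempty sequence can be obtained from some single-item sequence by a finite series of I-Concatenations and S-Concatenations, where each I-Concatenation adds an item alphabetically greater than all items in the current last itemset. -/
import Mathlib


open scoped BigOperators

/-- A q-item: an item (ℕ) together with its utility (ℝ). -/
abbrev QItem := ℕ × ℝ
/-- An element of a q-sequence: a finite collection of q-items. -/
abbrev QElem := List QItem
/-- A q-sequence: a list of elements. -/
abbrev QSeq := List QElem
/-- A quantitative sequential database: a finite list of q-sequences. -/
abbrev QDB := List QSeq
/-- A (pattern) sequence: a list of itemsets. -/
abbrev Pattern := List (Finset ℕ)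

def qElemUtil (e : QElem) : ℝ := (e.map Prod.snd).sum
def qSeqUtil (s : QSeq) : ℝ := (s.map qElemUtil).sum
def dbUtil (D : QDB) : ℝ := (D.map qSeqUtil).sum
def qElemItems (e : QElem) : Finset ℕ := (e.map Prod.fst).toFinset
def qSeqLen (s : QSeq) : ℕ := (s.map List.length).sum

def NonnegSeq (s : QSeq) : Prop := ∀ e ∈ s, ∀ p ∈ e, 0 ≤ p.2
def NonnegDB (D : QDB) : Prop := ∀ s ∈ D, NonnegSeq s

/-- Utility of the q-items of element `e` matched by itemset `X`. -/
def matchedUtil (X : Finset ℕ) (e : QElem) : ℝ :=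
  ((e.filter (fun p => decide (p.1 ∈ X))).map Prod.snd).sum

/-- `φ` is an (order-preserving) match of pattern `t` in q-sequence `s`. -/
def IsMatch (t : Pattern) (s : QSeq) (φ : Fin t.length → Fin s.length) : Prop :=
  StrictMono φ ∧ ∀ i : Fin t.length, t.get i ⊆ qElemItems (s.get (φ i))

/-- `t ⊆ s`: the pattern `t` is contained in the q-sequence `s`. -/
def Contains (t : Pattern) (s : QSeq) : Prop := ∃ φ, IsMatch t s φ

/-- Total utility of the q-items matched by the match `φ`. -/
def matchUtil (t : Pattern) (s : QSeq) (φ : Fin t.length → Fin s.length) : ℝ :=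
  ∑ i, matchedUtil (t.get i) (s.get (φ i))

/-- `u(t,s)`: the maximum utility over all matches of `t` in `s`. -/
noncomputable def patUtilIn (t : Pattern) (s : QSeq) : ℝ :=
  sSup {v | ∃ φ, IsMatch t s φ ∧ matchUtil t s φ = v}

/-- The pivot (last used element position) of a match. -/
def pivot (t : Pattern) (s : QSeq) (φ : Fin t.length → Fin s.length) : ℕ :=
  Finset.univ.sup (fun i => (φ i : ℕ))

/-- Pivot position of the first (leftmost) match of `t` in `s`. -/
noncomputable def firstPivot (t : Pattern) (s : QSeq) : ℕ :=
  sInf {p | ∃ φ, IsMatch t s φ ∧ pivot t s φ = p}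

/-- Remaining utility of `s` strictly after position `p`. -/
def restUtil (s : QSeq) (p : ℕ) : ℝ := qSeqUtil (s.drop (p + 1))

/-- `u(⟨s − t⟩_rest)`: utility of the part of `s` after the first match of `t`. -/
noncomputable def restAfterFirst (t : Pattern) (s : QSeq) : ℝ :=
  restUtil s (firstPivot t s)

open Classical in
/-- Sequence-weighted utilization of `t` in `D`. -/
noncomputable def SWU (t : Pattern) (D : QDB) : ℝ :=
  (D.map (fun s => if Contains t s then qSeqUtil s else 0)).sum

open Classical in
/-- `u(t)`: total utility of `t` in the database `D`. -/
noncomputable def patUtil (t : Pattern) (D : QDB) : ℝ :=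
  (D.map (fun s => if Contains t s then patUtilIn t s else 0)).sum

open Classical in
/-- Sequence extension utility of `t` in `D`. -/
noncomputable def SEU (t : Pattern) (D : QDB) : ℝ :=
  (D.map (fun s => if Contains t s then patUtilIn t s + restAfterFirst t s else 0)).sum

/-- `t` is a subsequence of `t'`. -/
def Subseq (t t' : Pattern) : Prop :=
  ∃ φ : Fin t.length → Fin t'.length, StrictMono φ ∧ ∀ i, t.get i ⊆ t'.get (φ i)

/-- I-Concatenation: insert item `i` into the last itemset of `t`. -/
def IConcat (t : Pattern) (i : ℕ) : Pattern :=
  match t with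
  | [] => [{i}]
  | [e] => [insert i e]
  | e :: rest => e :: IConcat rest i

/-- S-Concatenation: append the singleton itemset `{i}` at the end of `t`. -/
def SConcat (t : Pattern) (i : ℕ) : Pattern := t ++ [{i}]

/-- Length of a pattern: total number of items. -/
def patLength (t : Pattern) : ℕ := (t.map Finset.card).sum
/-- Size of a pattern: number of itemsets. -/
def patSize (t : Pattern) : ℕ := t.length

/-- One ordered concatenation step: S-Concatenation with any item, or
I-Concatenation with an item alphabetically greater than all items of the
current last itemset. -/
def OrdConcatStep (t t' : Pattern) : Prop :=
  ∃ i : ℕ, t' = SConcat t i ∨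
    (t' = IConcat t i ∧ ∀ ht : t ≠ [], ∀ j ∈ t.getLast ht, j < i)

/-- completeness of concatenation enumeration: every nonempty
sequence (of nonempty itemsets) is obtained from some single-item sequence by a
finite series of ordered I- and S-Concatenations. -/
lemma IConcat_append (s : Pattern) (e : Finset ℕ) (i : ℕ) :
    IConcat (s ++ [e]) i = s ++ [insert i e] := by
  induction s with
  | nil => simp [IConcat]
  | cons a s ih =>
    obtain ⟨b, l, hb⟩ := List.exists_cons_of_ne_nil (show s ++ [e] ≠ [] by simp)
    rw [List.cons_append, hb]
    simp only [IConcat]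
    rw [← hb, ih, List.cons_append]

theorem stmt17 (t : Pattern) (ht : t ≠ []) (hne : ∀ X ∈ t, X.Nonempty) :
    ∃ i : ℕ, Relation.ReflTransGen OrdConcatStep [{i}] t := by
  suffices H : ∀ n (t : Pattern), patLength t = n → t ≠ [] → (∀ X ∈ t, X.Nonempty) →
      ∃ i : ℕ, Relation.ReflTransGen OrdConcatStep [{i}] t from H _ t rfl ht hne
  intro n
  induction n using Nat.strong_induction_on with
  | _ n ih =>
  intro t hn ht hne
  obtain ⟨s, X, rfl⟩ : ∃ s X, t = s ++ [X] :=
    ⟨t.dropLast, t.getLast ht, (List.dropLast_append_getLast ht).symm⟩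
  have hX : X.Nonempty := hne X (by simp)
  have hlen : patLength (s ++ [X]) = patLength s + X.card := by
    simp [patLength]
  by_cases hcard : X.card = 1
  · obtain ⟨j, hj⟩ := Finset.card_eq_one.mp hcard
    cases s with
    | nil => exact ⟨j, by rw [hj]; exact .refl⟩
    | cons a s' =>
      have hne' : ∀ Y ∈ a :: s', Y.Nonempty := fun Y hY => hne Y (List.mem_append.mpr (Or.inl hY))
      have hlt : patLength (a :: s') < n := by
        rw [← hn, hlen, hcard]; omega
      obtain ⟨i, hi⟩ := ih _ hlt (a :: s') rfl (by simp) hne'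
      exact ⟨i, hi.tail ⟨j, Or.inl (by simp [SConcat, hj])⟩⟩
  · have h2 : 2 ≤ X.card := by
      have := Finset.card_pos.mpr hX; omega
    set m := X.max' hX with hm
    have hmX : m ∈ X := X.max'_mem hX
    set X' := X.erase m with hX'def
    have hX'card : X'.card = X.card - 1 := Finset.card_erase_of_mem hmX
    have hX' : X'.Nonempty := Finset.card_pos.mp (by omega)
    have hne' : ∀ Y ∈ s ++ [X'], Y.Nonempty := by
      intro Y hY
      rcases List.mem_append.mp hY with h | h
      · exact hne Y (List.mem_append.mpr (Or.inl h))
      · simp at h; subst h; exact hX'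
    have hlt : patLength (s ++ [X']) < n := by
      rw [← hn, hlen]
      have : patLength (s ++ [X']) = patLength s + X'.card := by simp [patLength]
      omega
    obtain ⟨i, hi⟩ := ih _ hlt (s ++ [X']) rfl (by simp) hne'
    refine ⟨i, hi.tail ⟨m, Or.inr ⟨?_, ?_⟩⟩⟩
    · rw [IConcat_append]
      congr 2
      exact (Finset.insert_erase hmX).symm
    · intro h j hj
      have hlast : (s ++ [X']).getLast h = X' := List.getLast_append _
      rw [hlast] at hj
      have := Finset.mem_erase.mp hj
      exact lt_of_le_of_ne (X.le_max' j this.2) this.1
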